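/- Consider the noisy consensus model on a fixed connected graph with N ≥ 2 nodes in which every neighborhood (a node together with its adjacent nodes) has at most D nodes. If the noise level satisfies 1 − 2/D < η ≤ 1, then for any state x that is neither all +1s nor all −1s, there exists a node i and a positive probability that at the next step only node i flips its value; consequently the state sum can increase by 2 and decrease by 2, each with positive probability. -/

import Mathlib

open MeasureTheory

lemma walk_cross {V : Type*} {G : SimpleGraph V} {a b : V} (w : G.Walk a b)
    (P : V → Prop) (hb : ¬ P b) : P a → ∃ u v, G.Adj u v ∧ P u ∧ ¬ P v := by
  induction w with
  | nil => intro ha; exact absurd ha hb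
  | @cons u c b' h _ ih =>
    intro ha
    by_cases hc : P c
    · exact ih hb hc
    · exact ⟨u, c, h, ha, hc⟩

theorem stmt_11 (N : ℕ) (hN : 2 ≤ N) (G : SimpleGraph (Fin N)) [DecidableRel G.Adj]
    (hconn : G.Connected) (D : ℕ) (hD : 2 ≤ D)
    (hdeg : ∀ i, (insert i (G.neighborFinset i)).card ≤ D)
    (η : ℝ) (hη0 : 1 - 2 / (D : ℝ) < η) (hη1 : η ≤ 1)
    (x : Fin N → ℝ) (hx : ∀ i, x i = 1 ∨ x i = -1)
    (hmix1 : ¬ ∀ i, x i = 1) (hmix2 : ¬ ∀ i, x i = -1)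
    (v : (Fin N → ℝ) → Fin N → ℝ)
    (hv : ∀ y i, v y i =
      (∑ j ∈ insert i (G.neighborFinset i), y j) / (insert i (G.neighborFinset i)).card)
    (upd : (Fin N → ℝ) → (Fin N → ℝ) → Fin N → ℝ)
    (hupd : ∀ y ξ i, upd y ξ i = if 0 < v y i + ξ i then 1 else -1)
    (μ : Measure (Fin N → ℝ))
    (hμ : μ = Measure.pi fun _ : Fin N =>
      (volume (Set.Icc (-η) η))⁻¹ • volume.restrict (Set.Icc (-η) η)) :
    (∃ i, 0 < μ {ξ | upd x ξ i = -(x i) ∧ ∀ j, j ≠ i → upd x ξ j = x j}) ∧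
      0 < μ {ξ | ∑ j, upd x ξ j = (∑ j, x j) + 2} ∧
      0 < μ {ξ | ∑ j, upd x ξ j = (∑ j, x j) - 2} := by
  classical
  have hDpos : (0:ℝ) < D := by
    have : (2:ℝ) ≤ D := by exact_mod_cast hD
    linarith
  have h2D : (2:ℝ)/D ≤ 1 := by rw [div_le_one hDpos]; exact_mod_cast hD
  have hηpos : 0 < η := lt_of_le_of_lt (by linarith) hη0
  have hηD : (D:ℝ) - 2 < η * D := by
    have := mul_lt_mul_of_pos_right hη0 hDpos
    have he : (1 - 2/(D:ℝ)) * D = D - 2 := by field_simp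
    linarith [he ▸ this]
  -- cardinality facts
  have hcardpos : ∀ j : Fin N, (0:ℝ) < (insert j (G.neighborFinset j)).card := by
    intro j
    have : j ∈ insert j (G.neighborFinset j) := Finset.mem_insert_self _ _
    exact_mod_cast Finset.card_pos.mpr ⟨j, this⟩
  have hcardD : ∀ j : Fin N, ((insert j (G.neighborFinset j)).card : ℝ) ≤ D := by
    intro j; exact_mod_cast hdeg j
  -- bounds on x
  have hxle : ∀ j, x j ≤ 1 := by intro j; rcases hx j with h | h <;> simp [h]
  have hxge : ∀ j, -1 ≤ x j := by intro j; rcases hx j with h | h <;> simp [h]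
  -- v bounds
  have hv_le : ∀ j, v x j ≤ 1 := by
    intro j
    rw [hv, div_le_one (hcardpos j)]
    calc ∑ k ∈ insert j (G.neighborFinset j), x k
        ≤ ∑ k ∈ insert j (G.neighborFinset j), 1 := Finset.sum_le_sum fun k _ => hxle k
      _ = _ := by simp
  have hlow : ∀ j k, k ∈ insert j (G.neighborFinset j) → x k = 1 → -η < v x j := by
    intro j k hk hk1
    set s := insert j (G.neighborFinset j) with hs
    have hn : (0:ℝ) < s.card := hcardpos j
    have hsum : 2 - (s.card : ℝ) ≤ ∑ m ∈ s, x m := by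
      have h1 : ∑ m ∈ s, x m = x k + ∑ m ∈ s.erase k, x m := (Finset.add_sum_erase s x hk).symm
      have h2 : -( ((s.erase k).card : ℝ)) ≤ ∑ m ∈ s.erase k, x m := by
        calc -(((s.erase k).card : ℝ)) = ∑ m ∈ s.erase k, (-1 : ℝ) := by simp
          _ ≤ _ := Finset.sum_le_sum fun m _ => hxge m
      have h3 : ((s.erase k).card : ℝ) = s.card - 1 := by
        rw [Finset.card_erase_of_mem hk]
        have : 1 ≤ s.card := Finset.card_pos.mpr ⟨k, hk⟩
        push_cast [this]; ring
      rw [h1, hk1]; linarith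
    rw [hv, lt_div_iff₀ hn]
    have hnD : (s.card : ℝ) ≤ D := hcardD j
    nlinarith [hηpos, mul_nonneg hηpos.le (sub_nonneg.mpr hnD)]
  have hhigh : ∀ j k, k ∈ insert j (G.neighborFinset j) → x k = -1 → v x j < η := by
    intro j k hk hk1
    set s := insert j (G.neighborFinset j) with hs
    have hn : (0:ℝ) < s.card := hcardpos j
    have hsum : ∑ m ∈ s, x m ≤ (s.card : ℝ) - 2 := by
      have h1 : ∑ m ∈ s, x m = x k + ∑ m ∈ s.erase k, x m := (Finset.add_sum_erase s x hk).symm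
      have h2 : ∑ m ∈ s.erase k, x m ≤ ((s.erase k).card : ℝ) := by
        calc ∑ m ∈ s.erase k, x m ≤ ∑ m ∈ s.erase k, (1:ℝ) :=
              Finset.sum_le_sum fun m _ => hxle m
          _ = _ := by simp
      have h3 : ((s.erase k).card : ℝ) = s.card - 1 := by
        rw [Finset.card_erase_of_mem hk]
        have : 1 ≤ s.card := Finset.card_pos.mpr ⟨k, hk⟩
        push_cast [this]; ring
      rw [h1, hk1]; linarith
    rw [hv, div_lt_iff₀ hn]
    have hnD : (s.card : ℝ) ≤ D := hcardD j
    nlinarith [mul_nonneg hηpos.le (sub_nonneg.mpr hnD)]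
  -- finite measure instance
  have hIccvol : volume (Set.Icc (-η) η) = ENNReal.ofReal (2*η) := by
    rw [Real.volume_Icc]; ring_nf
  have hIccne0 : volume (Set.Icc (-η) η) ≠ 0 := by
    rw [hIccvol]; simp [ENNReal.ofReal_eq_zero]; linarith
  have hIccnetop : volume (Set.Icc (-η) η) ≠ ⊤ := by rw [hIccvol]; exact ENNReal.ofReal_ne_top
  haveI : IsFiniteMeasure
      ((volume (Set.Icc (-η) η))⁻¹ • volume.restrict (Set.Icc (-η) η) : Measure ℝ) := by
    constructor
    rw [Measure.smul_apply, smul_eq_mul, Measure.restrict_apply MeasurableSet.univ]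
    simp only [Set.univ_inter]
    exact ENNReal.mul_lt_top (ENNReal.inv_lt_top.mpr (zero_lt_iff.mpr hIccne0)) hIccnetop.lt_top
  -- key lemma: for any admissible target t, the event {∀ j, upd x ξ j = t j} has positive measure
  have key : ∀ t : Fin N → ℝ, (∀ j, t j = 1 ∨ t j = -1) →
      (∀ j, t j = 1 → -η < v x j) → (∀ j, t j = -1 → v x j < η) →
      0 < μ {ξ | ∀ j, upd x ξ j = t j} := by
    intro t ht htp htm
    set I : Fin N → Set ℝ := fun j =>
      if t j = 1 then Set.Ioc (max (-(v x j)) (-η)) η else Set.Icc (-η) (min (-(v x j)) η) with hI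
    have hIsub : ∀ j, I j ⊆ Set.Icc (-η) η := by
      intro j ξ hξ
      by_cases h1 : t j = 1
      · simp only [hI, if_pos h1] at hξ
        obtain ⟨h2, h3⟩ := hξ
        exact ⟨le_of_lt (lt_of_le_of_lt (le_max_right _ _) h2), h3⟩
      · simp only [hI, if_neg h1] at hξ
        exact ⟨hξ.1, le_trans hξ.2 (min_le_right _ _)⟩
    have hImeas : ∀ j, MeasurableSet (I j) := by
      intro j
      by_cases h1 : t j = 1 <;> simp only [hI, if_pos, if_neg, h1]
      · exact measurableSet_Ioc
      · exact measurableSet_Icc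
    have hIvol : ∀ j, 0 < volume (I j) := by
      intro j
      by_cases h1 : t j = 1
      · have := htp j h1
        simp only [hI, if_pos h1, Real.volume_Ioc]
        rw [ENNReal.ofReal_pos, sub_pos, max_lt_iff]
        constructor <;> linarith
      · have h2 : t j = -1 := (ht j).resolve_left h1
        have := htm j h2
        simp only [hI, if_neg h1, Real.volume_Icc]
        rw [ENNReal.ofReal_pos, sub_pos]
        have : -η < min (-(v x j)) η := lt_min_iff.mpr ⟨by linarith, by linarith⟩
        linarith [this]
    have hsub2 : Set.univ.pi I ⊆ {ξ | ∀ j, upd x ξ j = t j} := by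
      intro ξ hξ j
      have hj := hξ j (Set.mem_univ j)
      rw [hupd]
      by_cases h1 : t j = 1
      · simp only [hI, if_pos h1] at hj
        have : -(v x j) < ξ j := lt_of_le_of_lt (le_max_left _ _) hj.1
        rw [if_pos (by linarith), h1]
      · have h2 : t j = -1 := (ht j).resolve_left h1
        simp only [hI, if_neg h1] at hj
        have : ξ j ≤ -(v x j) := le_trans hj.2 (min_le_left _ _)
        rw [if_neg (by linarith), h2]
    refine lt_of_lt_of_le ?_ (measure_mono hsub2)
    rw [hμ, Measure.pi_pi]
    apply CanonicallyOrderedAdd.prod_pos.mpr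
    intro j _
    rw [Measure.smul_apply, smul_eq_mul, Measure.restrict_apply (hImeas j),
      Set.inter_eq_left.mpr (hIsub j)]
    exact ENNReal.mul_pos (ENNReal.inv_ne_zero.mpr hIccnetop) (hIvol j).ne'
  -- find a crossing edge
  obtain ⟨a, ha⟩ := not_forall.mp hmix2
  have hxa : x a = 1 := (hx a).resolve_right ha
  obtain ⟨b, hb⟩ := not_forall.mp hmix1
  have hxb : ¬ x b = 1 := hb
  obtain ⟨u, w, huw, hu1, hw1⟩ :=
    walk_cross (Classical.choice (hconn.preconnected a b)) (fun z => x z = 1) hxb hxa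
  have hxw : x w = -1 := (hx w).resolve_left hw1
  have hmemw : u ∈ insert w (G.neighborFinset w) :=
    Finset.mem_insert_of_mem ((SimpleGraph.mem_neighborFinset _ _ _).mpr huw.symm)
  have hmemu : w ∈ insert u (G.neighborFinset u) :=
    Finset.mem_insert_of_mem ((SimpleGraph.mem_neighborFinset _ _ _).mpr huw)
  set tp : Fin N → ℝ := Function.update x w 1 with htp'
  set tm : Fin N → ℝ := Function.update x u (-1) with htm'
  have hposP : 0 < μ {ξ | ∀ j, upd x ξ j = tp j} := by
    apply key
    · intro j
      by_cases hjw : j = w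
      · subst hjw; left; simp [htp']
      · rw [htp', Function.update_of_ne hjw]; exact hx j
    · intro j hj
      by_cases hjw : j = w
      · subst hjw; exact hlow j u hmemw hu1
      · rw [htp', Function.update_of_ne hjw] at hj
        exact hlow j j (Finset.mem_insert_self _ _) hj
    · intro j hj
      by_cases hjw : j = w
      · subst hjw; simp [htp'] at hj; norm_num at hj
      · rw [htp', Function.update_of_ne hjw] at hj
        exact hhigh j j (Finset.mem_insert_self _ _) hj
  have hposM : 0 < μ {ξ | ∀ j, upd x ξ j = tm j} := by
    apply key
    · intro j
      by_cases hju : j = u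
      · subst hju; right; simp [htm']
      · rw [htm', Function.update_of_ne hju]; exact hx j
    · intro j hj
      by_cases hju : j = u
      · subst hju; simp [htm'] at hj; norm_num at hj
      · rw [htm', Function.update_of_ne hju] at hj
        exact hlow j j (Finset.mem_insert_self _ _) hj
    · intro j hj
      by_cases hju : j = u
      · subst hju; exact hhigh j w hmemu hxw
      · rw [htm', Function.update_of_ne hju] at hj
        exact hhigh j j (Finset.mem_insert_self _ _) hj
  have hsumP : ∑ j, tp j = (∑ j, x j) + 2 := by
    rw [htp', Finset.sum_update_of_mem (Finset.mem_univ w),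
      Finset.sum_eq_sum_sdiff_singleton_add (Finset.mem_univ w) x]
    rw [hxw]; ring
  have hsumM : ∑ j, tm j = (∑ j, x j) - 2 := by
    rw [htm', Finset.sum_update_of_mem (Finset.mem_univ u),
      Finset.sum_eq_sum_sdiff_singleton_add (Finset.mem_univ u) x]
    rw [hu1]; ring
  refine ⟨⟨w, lt_of_lt_of_le hposP (measure_mono ?_)⟩,
    lt_of_lt_of_le hposP (measure_mono ?_), lt_of_lt_of_le hposM (measure_mono ?_)⟩
  · intro ξ hξ
    refine ⟨?_, fun j hj => ?_⟩
    · rw [hξ w, htp', Function.update_self, hxw]; norm_num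
    · rw [hξ j, htp', Function.update_of_ne hj]
  · intro ξ hξ
    show ∑ j, upd x ξ j = (∑ j, x j) + 2
    rw [Finset.sum_congr rfl fun j _ => hξ j, hsumP]
  · intro ξ hξ
    show ∑ j, upd x ξ j = (∑ j, x j) - 2
    rw [Finset.sum_congr rfl fun j _ => hξ j, hsumM]
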